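/- Let Λ be a multilinear functional on 4-tuples of finite-measure subsets of ℝ² defined by Λ(E) = ∫_{ℝ⁴} ∏_{i=1}^4 1_{E_i}(L_i(z)) dz, where each L_i : ℝ⁴ → ℝ² is linear and surjective. If Θ(e) denotes the supremum of Λ(E) over all 4-tuples with |E_i| = e_i, then Θ satisfies the superadditivity (triangle) inequality Θ(e + e') ≥ Θ(e) + Θ(e') for all e, e' ∈ (0,∞)⁴, provided there exists a vector v ∈ ℝ⁴ not in the nullspace of any L_i. -/

import Mathlib

open MeasureTheory Set

noncomputable section

abbrev R2 := ℝ × ℝ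
abbrev R4 := (ℝ × ℝ) × ℝ × ℝ

/-- The multilinear functional Λ(E) = ∫_{ℝ⁴} ∏ᵢ 1_{Eᵢ}(Lᵢ z) dz. -/
def Lam (L : Fin 4 → R4 →ₗ[ℝ] R2) (E : Fin 4 → Set R2) : ℝ :=
  ∫ z : R4, ∏ i, (E i).indicator (fun _ => (1 : ℝ)) (L i z)

/-- Θ(e) = sup of Λ(E) over 4-tuples with |Eᵢ| = eᵢ. -/
def Theta (L : Fin 4 → R4 →ₗ[ℝ] R2) (e : Fin 4 → ℝ) : ℝ :=
  sSup {t | ∃ E : Fin 4 → Set R2, (∀ i, MeasurableSet (E i)) ∧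
    (∀ i, volume (E i) = ENNReal.ofReal (e i)) ∧ t = Lam L E}

namespace ThetaAux

open Bornology Metric Filter Pointwise ENNReal

instance : (volume : Measure R2).IsAddHaarMeasure :=
  (Measure.volume_eq_prod ℝ ℝ) ▸ Measure.prod.instIsAddHaarMeasure volume volume

instance : (volume : Measure R4).IsAddHaarMeasure :=
  (Measure.volume_eq_prod R2 (ℝ × ℝ)) ▸ Measure.prod.instIsAddHaarMeasure volume volume

variable (L : Fin 4 → R4 →ₗ[ℝ] R2)

/-- The integrand of `Lam`. -/
def fE (E : Fin 4 → Set R2) : R4 → ℝ :=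
  fun z => ∏ i, (E i).indicator (fun _ => (1 : ℝ)) (L i z)

lemma lam_def (E : Fin 4 → Set R2) : Lam L E = ∫ z : R4, fE L E z := rfl

lemma fE_nonneg (E : Fin 4 → Set R2) (z : R4) : 0 ≤ fE L E z :=
  Finset.prod_nonneg fun i _ => Set.indicator_nonneg (fun _ _ => zero_le_one) _

lemma fE_le_one (E : Fin 4 → Set R2) (z : R4) : fE L E z ≤ 1 :=
  Finset.prod_le_one (fun i _ => Set.indicator_nonneg (fun _ _ => zero_le_one) _)
    (fun i _ => Set.indicator_apply_le' (fun _ => le_refl 1) (fun _ => zero_le_one))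

lemma measurable_fE (E : Fin 4 → Set R2) (hE : ∀ i, MeasurableSet (E i)) :
    Measurable (fE L E) :=
  Finset.measurable_prod _ fun i _ =>
    (measurable_const.indicator (hE i)).comp
      (L i).continuous_of_finiteDimensional.measurable

lemma lam_nonneg (E : Fin 4 → Set R2) : 0 ≤ Lam L E :=
  integral_nonneg (fE_nonneg L E)

lemma fE_eq_zero {E : Fin 4 → Set R2} {z : R4} {i : Fin 4} (h : L i z ∉ E i) :
    fE L E z = 0 :=
  Finset.prod_eq_zero (Finset.mem_univ i) (Set.indicator_of_notMem h _)

lemma fE_eq_one {E : Fin 4 → Set R2} {z : R4} (h : ∀ i, L i z ∈ E i) :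
    fE L E z = 1 :=
  Finset.prod_eq_one fun i _ => Set.indicator_of_mem (h i) _

lemma fE_mono {E F : Fin 4 → Set R2} (hsub : ∀ i, E i ⊆ F i) (z : R4) :
    fE L E z ≤ fE L F z :=
  Finset.prod_le_prod (fun i _ => Set.indicator_nonneg (fun _ _ => zero_le_one) _)
    (fun i _ => Set.indicator_le_indicator_apply_of_subset (hsub i) zero_le_one)


lemma exists_norm_bound (hL : ∀ z : R4, (∀ i, L i z = 0) → z = 0) :
    ∃ C : ℝ, 0 ≤ C ∧ ∀ z : R4, ‖z‖ ≤ C * (‖L 0 z‖ + ‖L 1 z‖ + ‖L 2 z‖ + ‖L 3 z‖) := by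
  set Φ : R4 →ₗ[ℝ] R2 × R2 × R2 × R2 :=
    (L 0).prod ((L 1).prod ((L 2).prod (L 3))) with hΦ
  have hinj : Function.Injective Φ := by
    rw [← LinearMap.ker_eq_bot, LinearMap.ker_eq_bot']
    intro z hz
    have h0 : L 0 z = 0 ∧ L 1 z = 0 ∧ L 2 z = 0 ∧ L 3 z = 0 := by
      simpa [hΦ, LinearMap.prod_apply, Prod.ext_iff] using hz
    exact hL z (fun i => by fin_cases i <;> tauto)
  let eqv : R4 ≃ₗ[ℝ] LinearMap.range Φ := LinearEquiv.ofInjective Φ hinj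
  let g : LinearMap.range Φ →L[ℝ] R4 := eqv.symm.toLinearMap.toContinuousLinearMap
  refine ⟨‖g‖, ContinuousLinearMap.opNorm_nonneg g, fun z => ?_⟩
  have h1 : g (eqv z) = z := by
    simp [g, LinearEquiv.symm_apply_apply]
  have h2 : ‖(eqv z : R2 × R2 × R2 × R2)‖ = ‖Φ z‖ := by
    congr 1
  have h3 : ‖Φ z‖ ≤ ‖L 0 z‖ + ‖L 1 z‖ + ‖L 2 z‖ + ‖L 3 z‖ := by
    have n0 := norm_nonneg (L 0 z); have n1 := norm_nonneg (L 1 z)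
    have n2 := norm_nonneg (L 2 z); have n3 := norm_nonneg (L 3 z)
    have : ‖Φ z‖ = max ‖L 0 z‖ (max ‖L 1 z‖ (max ‖L 2 z‖ ‖L 3 z‖)) := by
      simp [hΦ, Prod.norm_def]
    rw [this]
    apply max_le (by linarith)
    exact max_le (by linarith) (max_le (by linarith) (by linarith))
  calc ‖z‖ = ‖g (eqv z)‖ := by rw [h1]
    _ ≤ ‖g‖ * ‖eqv z‖ := g.le_opNorm _
    _ = ‖g‖ * ‖Φ z‖ := by rw [← h2]; rfl
    _ ≤ ‖g‖ * (‖L 0 z‖ + ‖L 1 z‖ + ‖L 2 z‖ + ‖L 3 z‖) :=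
        mul_le_mul_of_nonneg_left h3 (ContinuousLinearMap.opNorm_nonneg g)


lemma exists_radius (E : Fin 4 → Set R2) (hEb : ∀ i, IsBounded (E i)) :
    ∃ R : ℝ, 0 ≤ R ∧ ∀ i, E i ⊆ Metric.closedBall 0 R := by
  choose r hr using fun i => (hEb i).subset_closedBall (0 : R2)
  refine ⟨max 0 (Finset.univ.sup' ⟨0, Finset.mem_univ 0⟩ r), le_max_left _ _, fun i => ?_⟩
  refine (hr i).trans (Metric.closedBall_subset_closedBall ?_)
  exact le_max_of_le_right (Finset.le_sup' r (Finset.mem_univ i))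

lemma integrable_fE (hL : ∀ z : R4, (∀ i, L i z = 0) → z = 0)
    (E : Fin 4 → Set R2) (hE : ∀ i, MeasurableSet (E i)) {R : ℝ} (hR : 0 ≤ R)
    (hER : ∀ i, E i ⊆ Metric.closedBall 0 R) : Integrable (fE L E) := by
  obtain ⟨C, hC0, hC⟩ := exists_norm_bound L hL
  have hbound : ∀ z : R4, ‖fE L E z‖ ≤
      (Metric.closedBall (0:R4) (C * (4 * R))).indicator (fun _ => (1:ℝ)) z := by
    intro z
    rw [Real.norm_of_nonneg (fE_nonneg L E z)]
    by_cases hz : z ∈ Metric.closedBall (0:R4) (C * (4 * R))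
    · rw [Set.indicator_of_mem hz]; exact fE_le_one L E z
    · rw [Set.indicator_of_notMem hz]
      have hz' : C * (4 * R) < ‖z‖ := by
        simpa [Metric.mem_closedBall, dist_zero_right] using hz
      by_cases hmem : ∀ i, L i z ∈ E i
      · exfalso
        have hn : ∀ i : Fin 4, ‖L i z‖ ≤ R := fun i => by
          have := hER i (hmem i)
          simpa [Metric.mem_closedBall, dist_zero_right] using this
        have := hC z
        have h4 : ‖L 0 z‖ + ‖L 1 z‖ + ‖L 2 z‖ + ‖L 3 z‖ ≤ 4 * R := by
          have := hn 0; have := hn 1; have := hn 2; have := hn 3; linarith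
        have : ‖z‖ ≤ C * (4 * R) :=
          le_trans (hC z) (mul_le_mul_of_nonneg_left h4 hC0)
        linarith
      · push_neg at hmem
        obtain ⟨i, hi⟩ := hmem
        exact le_of_eq (fE_eq_zero L hi)
  refine Integrable.mono' ?_ ((measurable_fE L E hE).aestronglyMeasurable)
    (Filter.Eventually.of_forall hbound)
  rw [integrable_indicator_iff measurableSet_closedBall]
  exact (integrableOn_const_iff).mpr (Or.inr measure_closedBall_lt_top)

lemma lam_mono {E F : Fin 4 → Set R2} (hintE : Integrable (fE L E))
    (hintF : Integrable (fE L F)) (hsub : ∀ i, E i ⊆ F i) : Lam L E ≤ Lam L F := by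
  rw [lam_def, lam_def]
  exact integral_mono hintE hintF (fE_mono L hsub)

lemma lam_translate (E : Fin 4 → Set R2) (w : R4) :
    Lam L (fun i => (fun x => x - L i w) ⁻¹' E i) = Lam L E := by
  have h : ∀ z : R4, fE L (fun i => (fun x => x - L i w) ⁻¹' E i) z = fE L E (z - w) := by
    intro z
    apply Finset.prod_congr rfl
    intro i _
    have hmem : (L i) z ∈ (fun x => x - L i w) ⁻¹' E i ↔ (L i) (z - w) ∈ E i := by
      simp [Set.mem_preimage, map_sub]
    by_cases h : (L i) z ∈ (fun x => x - L i w) ⁻¹' E i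
    · rw [Set.indicator_of_mem h, Set.indicator_of_mem (hmem.mp h)]
    · rw [Set.indicator_of_notMem h, Set.indicator_of_notMem (fun hc => h (hmem.mpr hc))]
  rw [lam_def, lam_def]
  simp_rw [h]
  exact integral_sub_right_eq_self (fE L E) w

lemma measurableSet_smul {s : Set R2} (hs : MeasurableSet s) {δ : ℝ} (hδ : δ ≠ 0) :
    MeasurableSet (δ • s) := by
  have h : δ • s = (fun x : R2 => δ⁻¹ • x) ⁻¹' s := by
    ext x; exact Set.mem_smul_set_iff_inv_smul_mem₀ hδ s x
  rw [h]
  exact (measurable_const_smul δ⁻¹) hs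

lemma volume_smul (s : Set R2) {δ : ℝ} (hδ : 0 < δ) :
    volume (δ • s) = ENNReal.ofReal (δ ^ 2) * volume s := by
  rw [Measure.addHaar_smul]
  congr 2
  have h2 : Module.finrank ℝ R2 = 2 := by simp
  rw [h2, abs_of_pos (pow_pos hδ 2)]

lemma lam_smul (E : Fin 4 → Set R2) {δ : ℝ} (hδ : 0 < δ) :
    Lam L (fun i => δ • E i) = δ ^ 4 * Lam L E := by
  have h1 : ∀ z : R4, fE L (fun i => δ • E i) z = fE L E (δ⁻¹ • z) := by
    intro z
    apply Finset.prod_congr rfl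
    intro i _
    have hmem : (L i) z ∈ δ • E i ↔ (L i) (δ⁻¹ • z) ∈ E i := by
      rw [_root_.map_smul]
      exact Set.mem_smul_set_iff_inv_smul_mem₀ (ne_of_gt hδ) _ _
    by_cases h : (L i) z ∈ δ • E i
    · rw [Set.indicator_of_mem h, Set.indicator_of_mem (hmem.mp h)]
    · rw [Set.indicator_of_notMem h, Set.indicator_of_notMem (fun hc => h (hmem.mpr hc))]
  have h4 : Module.finrank ℝ R4 = 4 := by simp
  have h2 := Measure.integral_comp_smul (μ := (volume : Measure R4)) (fE L E) δ⁻¹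
  rw [h4] at h2
  rw [lam_def, lam_def]
  simp_rw [h1]
  rw [h2, smul_eq_mul]
  congr 1
  rw [← inv_pow, inv_inv, abs_of_pos (pow_pos hδ 4)]

lemma exists_pad (m : ℝ≥0∞) (hm : m ≠ ⊤) (ρ : ℝ) :
    ∃ P : Set R2, MeasurableSet P ∧ volume P = m ∧ IsBounded P ∧ ∀ x ∈ P, ρ < x.1 := by
  refine ⟨Set.Ioo (ρ + 1) (ρ + 1 + m.toReal) ×ˢ Set.Ioo (0:ℝ) 1,
    (measurableSet_Ioo.prod measurableSet_Ioo), ?_, ?_, ?_⟩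
  · rw [Measure.volume_eq_prod, Measure.prod_prod, Real.volume_Ioo, Real.volume_Ioo]
    have : ρ + 1 + m.toReal - (ρ + 1) = m.toReal := by ring
    rw [this]
    simp [ENNReal.ofReal_toReal hm]
  · exact (Metric.isBounded_Ioo _ _).prod (Metric.isBounded_Ioo _ _)
  · rintro ⟨x1, x2⟩ ⟨hx1, _⟩
    have := hx1.1; simp only at this ⊢; linarith


lemma pad_tuple (hL : ∀ z : R4, (∀ i, L i z = 0) → z = 0)
    (F : Fin 4 → Set R2) (hF : ∀ i, MeasurableSet (F i)) (hFb : ∀ i, IsBounded (F i))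
    (m : Fin 4 → ℝ≥0∞) (hm : ∀ i, m i ≠ ⊤) (hFm : ∀ i, volume (F i) ≤ m i) :
    ∃ G : Fin 4 → Set R2, (∀ i, MeasurableSet (G i)) ∧ (∀ i, volume (G i) = m i) ∧
      Lam L F ≤ Lam L G := by
  obtain ⟨R, hR0, hRE⟩ := exists_radius F hFb
  choose P hPmeas hPvol hPb hPfar using fun i =>
    exists_pad (m i - volume (F i)) (ne_top_of_le_ne_top (hm i) tsub_le_self) R
  have hdisj : ∀ i, Disjoint (F i) (P i) := by
    intro i
    rw [Set.disjoint_left]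
    intro x hxF hxP
    have h1 : ‖x‖ ≤ R := by
      have := hRE i hxF
      simpa [Metric.mem_closedBall, dist_zero_right] using this
    have h2 : R < x.1 := hPfar i x hxP
    have h3 : x.1 ≤ ‖x‖ := (le_abs_self x.1).trans (by rw [← Real.norm_eq_abs]; exact norm_fst_le x)
    linarith
  refine ⟨fun i => F i ∪ P i, fun i => (hF i).union (hPmeas i), fun i => ?_, ?_⟩
  · rw [measure_union (hdisj i) (hPmeas i), hPvol i]
    exact add_tsub_cancel_of_le (hFm i)
  · have hGb : ∀ i, IsBounded (F i ∪ P i) := fun i => (hFb i).union (hPb i)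
    obtain ⟨R', hR'0, hR'E⟩ := exists_radius _ hGb
    exact lam_mono L (integrable_fE L hL F hF hR0 hRE)
      (integrable_fE L hL _ (fun i => (hF i).union (hPmeas i)) hR'0 hR'E)
      (fun i => Set.subset_union_left)

lemma trunc (E : Fin 4 → Set R2) (hE : ∀ i, MeasurableSet (E i)) {ε : ℝ} (hε : 0 < ε) :
    ∃ F : Fin 4 → Set R2, (∀ i, MeasurableSet (F i)) ∧ (∀ i, F i ⊆ E i) ∧
      (∀ i, IsBounded (F i)) ∧ Lam L E - ε ≤ Lam L F := by
  by_cases hint : Integrable (fE L E)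
  · set g : ℕ → R4 → ℝ := fun n => fE L (fun i => E i ∩ Metric.closedBall 0 n) with hg
    have hgmeas : ∀ n, AEStronglyMeasurable (g n) volume := fun n =>
      (measurable_fE L _ fun i => (hE i).inter measurableSet_closedBall).aestronglyMeasurable
    have hbound : ∀ n, ∀ᵐ z : R4, ‖g n z‖ ≤ fE L E z := by
      intro n
      refine Filter.Eventually.of_forall fun z => ?_
      rw [Real.norm_of_nonneg (fE_nonneg L _ z)]
      exact fE_mono L (fun i => Set.inter_subset_left) z
    have hlim : ∀ᵐ z : R4, Filter.Tendsto (fun n => g n z) Filter.atTop (nhds (fE L E z)) := by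
      refine Filter.Eventually.of_forall fun z => ?_
      apply tendsto_atTop_of_eventually_const
        (i₀ := Nat.ceil (‖L 0 z‖ + ‖L 1 z‖ + ‖L 2 z‖ + ‖L 3 z‖))
      intro n hn
      have hnz : ∀ i : Fin 4, ‖L i z‖ ≤ (n : ℝ) := by
        have hsum : (‖L 0 z‖ + ‖L 1 z‖ + ‖L 2 z‖ + ‖L 3 z‖ : ℝ) ≤ n := by
          calc (‖L 0 z‖ + ‖L 1 z‖ + ‖L 2 z‖ + ‖L 3 z‖ : ℝ)
              ≤ (Nat.ceil (‖L 0 z‖ + ‖L 1 z‖ + ‖L 2 z‖ + ‖L 3 z‖) : ℝ) := Nat.le_ceil _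
            _ ≤ n := by exact_mod_cast hn
        intro i
        have h0 := norm_nonneg (L 0 z); have h1 := norm_nonneg (L 1 z)
        have h2 := norm_nonneg (L 2 z); have h3 := norm_nonneg (L 3 z)
        have key : ‖L i z‖ ≤ ‖L 0 z‖ + ‖L 1 z‖ + ‖L 2 z‖ + ‖L 3 z‖ := by
          fin_cases i
          · show ‖L 0 z‖ ≤ _; linarith
          · show ‖L 1 z‖ ≤ _; linarith
          · show ‖L 2 z‖ ≤ _; linarith
          · show ‖L 3 z‖ ≤ _; linarith
        linarith
      apply Finset.prod_congr rfl
      intro i _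
      by_cases h : L i z ∈ E i
      · rw [Set.indicator_of_mem h, Set.indicator_of_mem]
        exact ⟨h, by simpa [Metric.mem_closedBall, dist_zero_right] using hnz i⟩
      · rw [Set.indicator_of_notMem h, Set.indicator_of_notMem (fun hc => h hc.1)]
    have htend := tendsto_integral_of_dominated_convergence (fE L E) hgmeas hint hbound hlim
    have hev : ∀ᶠ n in Filter.atTop, Lam L E - ε < ∫ z : R4, g n z :=
      htend.eventually (eventually_gt_nhds (by rw [← lam_def]; linarith))
    obtain ⟨n, hn⟩ := hev.exists
    refine ⟨fun i => E i ∩ Metric.closedBall 0 n, fun i => (hE i).inter measurableSet_closedBall,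
      fun i => Set.inter_subset_left, fun i => isBounded_closedBall.subset Set.inter_subset_right,
      ?_⟩
    rw [lam_def]
    exact le_of_lt hn
  · have h0 : Lam L E = 0 := by rw [lam_def]; exact integral_undef hint
    refine ⟨fun _ => ∅, fun _ => MeasurableSet.empty, fun _ => Set.empty_subset _,
      fun _ => Bornology.isBounded_empty, ?_⟩
    have := lam_nonneg L (fun _ => (∅ : Set R2))
    linarith


lemma combine (hL : ∀ z : R4, (∀ i, L i z = 0) → z = 0)
    (v : R4) (hv : ∀ i, L i v ≠ 0)
    (e e' : Fin 4 → ℝ) (he : ∀ i, 0 ≤ e i) (he' : ∀ i, 0 ≤ e' i)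
    (E E' : Fin 4 → Set R2) (hE : ∀ i, MeasurableSet (E i)) (hE' : ∀ i, MeasurableSet (E' i))
    (hEv : ∀ i, volume (E i) = ENNReal.ofReal (e i))
    (hE'v : ∀ i, volume (E' i) = ENNReal.ofReal (e' i))
    {ε : ℝ} (hε : 0 < ε) :
    ∃ G : Fin 4 → Set R2, (∀ i, MeasurableSet (G i)) ∧
      (∀ i, volume (G i) = ENNReal.ofReal (e i + e' i)) ∧
      Lam L E + Lam L E' - 2 * ε ≤ Lam L G := by
  obtain ⟨F, hFmeas, hFsub, hFb, hFlam⟩ := trunc L E hE hε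
  obtain ⟨F', hF'meas, hF'sub, hF'b, hF'lam⟩ := trunc L E' hE' hε
  obtain ⟨ρ, hρ0, hρ⟩ := exists_radius (fun i => F i ∪ F' i) (fun i => (hFb i).union (hF'b i))
  have hρF : ∀ i, F i ⊆ Metric.closedBall 0 ρ := fun i =>
    (Set.subset_union_left).trans (hρ i)
  have hρF' : ∀ i, F' i ⊆ Metric.closedBall 0 ρ := fun i =>
    (Set.subset_union_right).trans (hρ i)
  set S : ℝ := ∑ i, ‖L i v‖⁻¹ with hS
  set r : ℝ := (2 * ρ + 1) * S with hr
  have hSr : ∀ j : Fin 4, 2 * ρ < r * ‖L j v‖ := by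
    intro j
    have hj : (0:ℝ) < ‖L j v‖ := norm_pos_iff.mpr (hv j)
    have hsingle : ‖L j v‖⁻¹ ≤ S := Finset.single_le_sum
      (f := fun i => ‖L i v‖⁻¹) (fun i _ => inv_nonneg.mpr (norm_nonneg _)) (Finset.mem_univ j)
    have h1 : (2 * ρ + 1) * ‖L j v‖⁻¹ * ‖L j v‖ ≤ r * ‖L j v‖ := by
      apply mul_le_mul_of_nonneg_right _ hj.le
      exact mul_le_mul_of_nonneg_left hsingle (by linarith)
    rw [mul_assoc, inv_mul_cancel₀ (ne_of_gt hj), mul_one] at h1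
    linarith
  have hrpos : 0 ≤ r := by
    have : 0 ≤ S := Finset.sum_nonneg fun i _ => inv_nonneg.mpr (norm_nonneg _)
    positivity
  set w : R4 := r • v with hw
  have hnormw : ∀ j, ‖L j w‖ = r * ‖L j v‖ := by
    intro j
    rw [hw, _root_.map_smul, norm_smul, Real.norm_eq_abs, abs_of_nonneg hrpos]
  set T : Fin 4 → Set R2 := fun i => (fun x => x - L i w) ⁻¹' F' i with hT
  have hTmeas : ∀ i, MeasurableSet (T i) :=
    fun i => (measurable_id.sub measurable_const) (hF'meas i)
  have hTsub : ∀ i, T i ⊆ Metric.closedBall (L i w) ρ := by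
    intro i x hx
    have hmem := hρF' i hx
    rw [Metric.mem_closedBall] at hmem ⊢
    rw [dist_zero_right] at hmem
    rw [dist_eq_norm]
    exact hmem
  have hTvol : ∀ i, volume (T i) = volume (F' i) := by
    intro i
    have : (fun x : R2 => x - L i w) = fun x : R2 => x + (-(L i w)) := by
      funext x; rw [sub_eq_add_neg]
    rw [hT]; simp only [this]
    exact measure_preimage_add_right volume (-(L i w)) (F' i)
  have hdisj : ∀ i, Disjoint (F i) (T i) := by
    intro i
    rw [Set.disjoint_left]
    intro x hxF hxT
    have h1 : ‖x‖ ≤ ρ := by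
      have := hρF i hxF
      simpa [Metric.mem_closedBall, dist_zero_right] using this
    have h2 : ‖x - L i w‖ ≤ ρ := by
      have := hTsub i hxT
      rw [Metric.mem_closedBall, dist_eq_norm] at this
      exact this
    have h3 : ‖L i w‖ ≤ 2 * ρ := by
      have : ‖L i w‖ = ‖x - (x - L i w)‖ := by congr 1; abel
      rw [this]
      calc ‖x - (x - L i w)‖ ≤ ‖x‖ + ‖x - L i w‖ := norm_sub_le _ _
        _ ≤ 2 * ρ := by linarith
    have := hSr i
    rw [← hnormw i] at this
    linarith
  set U : Fin 4 → Set R2 := fun i => F i ∪ T i with hU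
  have hUmeas : ∀ i, MeasurableSet (U i) := fun i => (hFmeas i).union (hTmeas i)
  have hUb : ∀ i, IsBounded (U i) := fun i =>
    (hFb i).union (isBounded_closedBall.subset (hTsub i))
  have hUvol : ∀ i, volume (U i) ≤ ENNReal.ofReal (e i + e' i) := by
    intro i
    rw [measure_union (hdisj i) (hTmeas i), hTvol i]
    calc volume (F i) + volume (F' i) ≤ volume (E i) + volume (E' i) :=
          add_le_add (measure_mono (hFsub i)) (measure_mono (hF'sub i))
      _ = ENNReal.ofReal (e i) + ENNReal.ofReal (e' i) := by rw [hEv i, hE'v i]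
      _ = ENNReal.ofReal (e i + e' i) := (ENNReal.ofReal_add (he i) (he' i)).symm
  -- integrability
  obtain ⟨RU, hRU0, hRUE⟩ := exists_radius U hUb
  have hintU : Integrable (fE L U) := integrable_fE L hL U hUmeas hRU0 hRUE
  have hintF : Integrable (fE L F) := integrable_fE L hL F hFmeas hρ0 hρF
  obtain ⟨RT, hRT0, hRTE⟩ := exists_radius T (fun i => isBounded_closedBall.subset (hTsub i))
  have hintT : Integrable (fE L T) := integrable_fE L hL T hTmeas hRT0 hRTE
  have hkey : Lam L F + Lam L T ≤ Lam L U := by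
    rw [lam_def, lam_def, lam_def, ← integral_add hintF hintT]
    apply integral_mono (hintF.add hintT) hintU
    intro z
    simp only [Pi.add_apply]
    by_cases h1 : ∀ i, L i z ∈ F i
    · have hz2 : fE L T z = 0 := by
        have : L 0 z ∉ T 0 := fun hc => (Set.disjoint_left.mp (hdisj 0)) (h1 0) hc
        exact fE_eq_zero L this
      rw [hz2, add_zero]
      exact fE_mono L (fun i => Set.subset_union_left) z
    · push_neg at h1
      obtain ⟨i, hi⟩ := h1
      rw [fE_eq_zero L hi, zero_add]
      exact fE_mono L (fun i => Set.subset_union_right) z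
  have hTlam : Lam L T = Lam L F' := lam_translate L F' w
  obtain ⟨G, hGmeas, hGvol, hGlam⟩ := pad_tuple L hL U hUmeas hUb
    (fun i => ENNReal.ofReal (e i + e' i)) (fun i => ENNReal.ofReal_ne_top) hUvol
  refine ⟨G, hGmeas, hGvol, ?_⟩
  have : Lam L F + Lam L F' ≤ Lam L G := by
    rw [← hTlam]
    exact hkey.trans hGlam
  linarith


lemma lam_eq_zero_of_common_kernel {n : R4} (hn : n ≠ 0) (hker : ∀ i, L i n = 0)
    (E : Fin 4 → Set R2) (hE : ∀ i, MeasurableSet (E i)) : Lam L E = 0 := by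
  classical
  set Sset : Set R4 := {z | ∀ i, L i z ∈ E i} with hSset
  have hSmeas : MeasurableSet Sset := by
    have h : Sset = ⋂ i, (L i) ⁻¹' (E i) := by
      ext z; simp [hSset]
    rw [h]
    exact MeasurableSet.iInter fun i =>
      (hE i).preimage (L i).continuous_of_finiteDimensional.measurable
  have hfeq : fE L E = Sset.indicator (fun _ => (1:ℝ)) := by
    funext z
    by_cases hz : z ∈ Sset
    · rw [Set.indicator_of_mem hz, fE_eq_one L hz]
    · rw [Set.indicator_of_notMem hz]
      have : ∃ i, L i z ∉ E i := by
        by_contra hc; push_neg at hc; exact hz hc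
      obtain ⟨i, hi⟩ := this
      exact fE_eq_zero L hi
  have hlam : Lam L E = (volume Sset).toReal := by
    rw [lam_def, hfeq]
    have := integral_indicator_one (μ := (volume : Measure R4)) hSmeas
    rw [measureReal_def] at this
    exact this
  obtain ⟨g, hg1, hgn⟩ := exists_dual_vector ℝ n (norm_ne_zero_iff.mpr hn)
  set φ : R4 →L[ℝ] ℝ := ‖n‖⁻¹ • g with hφ
  have hφn : φ n = 1 := by
    rw [hφ]
    simp only [ContinuousLinearMap.coe_smul', Pi.smul_apply, hgn, smul_eq_mul]
    exact inv_mul_cancel₀ (norm_ne_zero_iff.mpr hn)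
  set slab : ℤ → Set R4 := fun k => φ ⁻¹' (Set.Ico (k : ℝ) (k + 1)) with hslab
  have hslabmeas : ∀ k, MeasurableSet (slab k) :=
    fun k => measurableSet_Ico.preimage φ.measurable
  have hcover : (⋃ k : ℤ, Sset ∩ slab k) = Sset := by
    ext z
    simp only [Set.mem_iUnion, Set.mem_inter_iff, hslab, Set.mem_preimage, Set.mem_Ico]
    constructor
    · rintro ⟨k, hk, _⟩; exact hk
    · intro hz
      exact ⟨⌊φ z⌋, hz, Int.floor_le _, Int.lt_floor_add_one _⟩
  have htrans : ∀ k : ℤ, Sset ∩ slab k = (fun z => z - (k : ℝ) • n) ⁻¹' (Sset ∩ slab 0) := by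
    intro k
    ext z
    have hLz : ∀ i, L i (z - (k:ℝ) • n) = L i z := by
      intro i
      rw [map_sub, _root_.map_smul, hker i, smul_zero, sub_zero]
    have hφz : φ (z - (k:ℝ) • n) = φ z - k := by
      rw [map_sub, _root_.map_smul, hφn, smul_eq_mul, mul_one]
    simp only [Set.mem_inter_iff, Set.mem_preimage, hslab, Set.mem_Ico, hSset, Set.mem_setOf_eq]
    constructor
    · rintro ⟨h1, h2, h3⟩
      refine ⟨fun i => by rw [hLz i]; exact h1 i, ?_, ?_⟩
      · rw [hφz]; push_cast; linarith
      · rw [hφz]; push_cast; linarith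
    · rintro ⟨h1, h2, h3⟩
      rw [hφz] at h2 h3
      push_cast at h2 h3
      refine ⟨fun i => by rw [← hLz i]; exact h1 i, by linarith, by linarith⟩
  have hvol : ∀ k : ℤ, volume (Sset ∩ slab k) = volume (Sset ∩ slab 0) := by
    intro k
    rw [htrans k]
    have : (fun z : R4 => z - (k : ℝ) • n) = fun z : R4 => z + (-((k:ℝ) • n)) := by
      funext z; rw [sub_eq_add_neg]
    rw [this]
    exact measure_preimage_add_right volume _ _
  rcases eq_or_ne (volume (Sset ∩ slab 0)) 0 with h0 | h0
  · have hnull : volume Sset = 0 := by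
      rw [← hcover]
      exact measure_iUnion_null (fun k => (hvol k).trans h0)
    rw [hlam, hnull]; simp
  · have htop : volume Sset = ⊤ := by
      rw [← hcover]
      have hdisj : Pairwise (Function.onFun Disjoint fun k => Sset ∩ slab k) := by
        intro k l hkl
        refine Set.disjoint_left.mpr fun z hzk hzl => hkl ?_
        have h1 := hzk.2; have h2 := hzl.2
        simp only [hslab, Set.mem_preimage, Set.mem_Ico] at h1 h2
        have hk1 : (k : ℝ) < l + 1 := lt_of_le_of_lt h1.1 h2.2
        have hl1 : (l : ℝ) < k + 1 := lt_of_le_of_lt h2.1 h1.2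
        have : k ≤ l := by exact_mod_cast Int.lt_add_one_iff.mp (by exact_mod_cast hk1)
        have : l ≤ k := by exact_mod_cast Int.lt_add_one_iff.mp (by exact_mod_cast hl1)
        omega
      rw [measure_iUnion hdisj (fun k => hSmeas.inter (hslabmeas k))]
      simp_rw [hvol]
      exact ENNReal.tsum_const_eq_top_of_ne_zero h0
    rw [hlam, htop]; simp


def SS (c : Fin 4 → ℝ) : Set ℝ :=
  {t | ∃ E : Fin 4 → Set R2, (∀ i, MeasurableSet (E i)) ∧
    (∀ i, volume (E i) = ENNReal.ofReal (c i)) ∧ t = Lam L E}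

lemma theta_eq (c : Fin 4 → ℝ) : Theta L c = sSup (SS L c) := rfl

lemma mem_nonneg {c : Fin 4 → ℝ} {t : ℝ} (h : t ∈ SS L c) : 0 ≤ t := by
  obtain ⟨E, _, _, rfl⟩ := h
  exact lam_nonneg L E

lemma ss_nonempty (c : Fin 4 → ℝ) : (SS L c).Nonempty := by
  choose P hPmeas hPvol hPb hPfar using fun i : Fin 4 =>
    exists_pad (ENNReal.ofReal (c i)) ENNReal.ofReal_ne_top 0
  exact ⟨Lam L P, P, hPmeas, hPvol, rfl⟩

lemma ss_nonempty_bounded (c : Fin 4 → ℝ) : ∃ E : Fin 4 → Set R2,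
    (∀ i, MeasurableSet (E i)) ∧ (∀ i, volume (E i) = ENNReal.ofReal (c i)) := by
  choose P hPmeas hPvol hPb hPfar using fun i : Fin 4 =>
    exists_pad (ENNReal.ofReal (c i)) ENNReal.ofReal_ne_top 0
  exact ⟨P, hPmeas, hPvol⟩

lemma unbdd_transfer (hL : ∀ z : R4, (∀ i, L i z = 0) → z = 0)
    (e e' : Fin 4 → ℝ) (he : ∀ i, 0 < e i) (he' : ∀ i, 0 < e' i)
    (h : ¬ BddAbove (SS L (e + e'))) : ¬ BddAbove (SS L e) := by
  rw [not_bddAbove_iff] at h ⊢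
  intro M
  -- the scaling factor
  set m : ℝ := Finset.univ.inf' Finset.univ_nonempty (fun i => e i / (e i + e' i)) with hm
  have hm0 : 0 < m := by
    rw [hm, Finset.lt_inf'_iff]
    intro i _
    exact div_pos (he i) (by have := he i; have := he' i; linarith)
  have hmle : ∀ i, m * (e i + e' i) ≤ e i := by
    intro i
    have h1 : m ≤ e i / (e i + e' i) := Finset.inf'_le _ (Finset.mem_univ i)
    have h2 : (0:ℝ) < e i + e' i := by have := he i; have := he' i; linarith
    calc m * (e i + e' i) ≤ (e i / (e i + e' i)) * (e i + e' i) :=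
          mul_le_mul_of_nonneg_right h1 h2.le
      _ = e i := div_mul_cancel₀ _ (ne_of_gt h2)
  set δ : ℝ := Real.sqrt m with hδdef
  have hδ0 : 0 < δ := Real.sqrt_pos.mpr hm0
  have hδ2 : δ ^ 2 = m := Real.sq_sqrt hm0.le
  have hδ4 : 0 < δ ^ 4 := by positivity
  obtain ⟨t, ht, hMt⟩ := h (max (M / δ ^ 4 + 1) 1)
  obtain ⟨F0, hF0meas, hF0vol, rfl⟩ := ht
  have htpos : (0:ℝ) < Lam L F0 := lt_of_lt_of_le (lt_of_lt_of_le one_pos (le_max_right _ _)) hMt.le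
  obtain ⟨F, hFmeas, hFsub, hFb, hFlam⟩ := trunc L F0 hF0meas one_pos
  have hFlam' : M / δ ^ 4 < Lam L F := by
    have h1 : M / δ ^ 4 + 1 < Lam L F0 := lt_of_le_of_lt (le_max_left _ _) hMt
    linarith
  set D : Fin 4 → Set R2 := fun i => δ • F i with hD
  have hDmeas : ∀ i, MeasurableSet (D i) := fun i => measurableSet_smul (hFmeas i) (ne_of_gt hδ0)
  have hDb : ∀ i, IsBounded (D i) := fun i => (hFb i).smul₀ δ
  have hDvol : ∀ i, volume (D i) ≤ ENNReal.ofReal (e i) := by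
    intro i
    rw [hD]
    rw [volume_smul (F i) hδ0, hδ2]
    calc ENNReal.ofReal m * volume (F i) ≤ ENNReal.ofReal m * ENNReal.ofReal (e i + e' i) := by
          apply mul_le_mul_right
          calc volume (F i) ≤ volume (F0 i) := measure_mono (hFsub i)
            _ = ENNReal.ofReal ((e + e') i) := hF0vol i
            _ = ENNReal.ofReal (e i + e' i) := by rw [Pi.add_apply]
      _ = ENNReal.ofReal (m * (e i + e' i)) := (ENNReal.ofReal_mul hm0.le).symm
      _ ≤ ENNReal.ofReal (e i) := ENNReal.ofReal_le_ofReal (hmle i)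
  have hDlam : Lam L D = δ ^ 4 * Lam L F := lam_smul L F hδ0
  obtain ⟨G, hGmeas, hGvol, hGlam⟩ := pad_tuple L hL D hDmeas hDb
    (fun i => ENNReal.ofReal (e i)) (fun i => ENNReal.ofReal_ne_top) hDvol
  refine ⟨Lam L G, ⟨G, hGmeas, hGvol, rfl⟩, ?_⟩
  have : M < δ ^ 4 * Lam L F := by
    have := (div_lt_iff₀' hδ4).mp hFlam'
    linarith
  calc M < δ ^ 4 * Lam L F := this
    _ = Lam L D := hDlam.symm
    _ ≤ Lam L G := hGlam


end ThetaAux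

open ThetaAux

/-- Superadditivity (triangle inequality) of Θ. -/
theorem theta_superadditive (L : Fin 4 → R4 →ₗ[ℝ] R2)
    (hsurj : ∀ i, Function.Surjective (L i))
    (v : R4) (hv : ∀ i, L i v ≠ 0)
    (e e' : Fin 4 → ℝ) (he : ∀ i, 0 < e i) (he' : ∀ i, 0 < e' i) :
    Theta L e + Theta L e' ≤ Theta L (e + e') := by
  by_cases hker : ∃ n : R4, n ≠ 0 ∧ ∀ i, L i n = 0
  · -- degenerate case: common kernel direction, everything is zero
    obtain ⟨n, hn, hkn⟩ := hker
    have hz : ∀ c : Fin 4 → ℝ, Theta L c = 0 := by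
      intro c
      rw [theta_eq]
      have hss : SS L c = {0} := by
        apply Set.Subset.antisymm
        · rintro t ⟨E, hE, _, rfl⟩
          exact lam_eq_zero_of_common_kernel L hn hkn E hE
        · rintro t rfl
          obtain ⟨E, hE, hEv⟩ := ss_nonempty_bounded c
          exact ⟨E, hE, hEv, (lam_eq_zero_of_common_kernel L hn hkn E hE).symm⟩
      rw [hss, csSup_singleton]
    rw [hz e, hz e', hz (e + e')]
    norm_num
  · push_neg at hker
    have hL : ∀ z : R4, (∀ i, L i z = 0) → z = 0 := by
      intro z hz
      by_contra hz0
      obtain ⟨i, hi⟩ := hker z hz0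
      exact hi (hz i)
    by_cases hbdd : BddAbove (SS L (e + e'))
    · -- main case
      have key : ∀ t ∈ SS L e, ∀ t' ∈ SS L e', t + t' ≤ Theta L (e + e') := by
        rintro t ⟨E, hE, hEv, rfl⟩ t' ⟨E', hE', hE'v, rfl⟩
        have h2 : ∀ ε : ℝ, 0 < ε → Lam L E + Lam L E' ≤ Theta L (e + e') + ε := by
          intro ε hε
          obtain ⟨G, hG, hGv, hGl⟩ := combine L hL v hv e e' (fun i => (he i).le)
            (fun i => (he' i).le) E E' hE hE' hEv hE'v (half_pos hε)
          have hmem : Lam L G ∈ SS L (e + e') := ⟨G, hG, fun i => by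
            rw [Pi.add_apply]; exact hGv i, rfl⟩
          have := le_csSup hbdd hmem
          rw [theta_eq]
          linarith
        by_contra hcon
        push_neg at hcon
        have := h2 ((Lam L E + Lam L E' - Theta L (e + e')) / 2) (by linarith)
        linarith
      obtain ⟨a, ha⟩ := ss_nonempty L e
      obtain ⟨b, hb⟩ := ss_nonempty L e'
      have hΘ0 : 0 ≤ Theta L (e + e') := by
        have := key a ha b hb
        have := mem_nonneg L ha
        have := mem_nonneg L hb
        linarith
      have h1 : Theta L e ≤ Theta L (e + e') - Theta L e' := by
        rw [theta_eq L e]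
        apply Real.sSup_le
        · intro t ht
          have h2 : sSup (SS L e') ≤ Theta L (e + e') - t := by
            apply Real.sSup_le
            · intro t' ht'
              have := key t ht t' ht'
              linarith
            · have := key t ht b hb
              have := mem_nonneg L hb
              linarith
          rw [theta_eq L e']
          linarith
        · rw [theta_eq L e']
          have h3 : sSup (SS L e') ≤ Theta L (e + e') := by
            apply Real.sSup_le
            · intro t' ht'
              have := key a ha t' ht'
              have := mem_nonneg L ha
              linarith
            · exact hΘ0
          linarith
      linarith
    · -- unbounded case: everything is zero
      have h0 : Theta L (e + e') = 0 := by
        rw [theta_eq]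
        exact Real.sSup_of_not_bddAbove hbdd
      have hA : Theta L e = 0 := by
        rw [theta_eq]
        exact Real.sSup_of_not_bddAbove (unbdd_transfer L hL e e' he he' hbdd)
      have hbdd' : ¬ BddAbove (SS L (e' + e)) := by
        rwa [add_comm e' e]
      have hB : Theta L e' = 0 := by
        rw [theta_eq]
        exact Real.sSup_of_not_bddAbove (unbdd_transfer L hL e' e he' he hbdd')
      rw [h0, hA, hB]
      norm_num

end
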